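/- Let L be a ℤ-graded Lie algebra over ℝ whose grading is concentrated in degrees [−1, N], equipped with an Euler element ε ∈ L_0, i.e. ⁅ε, x⁆ = p • x for every p ∈ ℤ and every x ∈ L_p, and assume L_{−1} ≠ 0. Let c be a nonzero real number and let X ∈ L be an element all of whose homogeneous components lie in even nonnegative degrees and whose component in L_0 equals c • ε. Then ad X is not a nilpotent endomorphism of L; indeed, for every nonzero y ∈ L_{−1} and every natural number m, the component in L_{−1} of (ad X)^m(y) equals (−c)^m • y, which is nonzero. -/

import Mathlib

/-- Let `L` be a `ℤ`-graded real Lie algebra (internal direct sum of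
submodules `𝓛 p` with `⁅𝓛 p, 𝓛 q⁆ ⊆ 𝓛 (p + q)`), concentrated in degrees `[-1, N]`, with an
Euler element `ε ∈ 𝓛 0` and `𝓛 (-1) ≠ ⊥`.  Let `c ≠ 0` be real and let `X ∈ L` have all its
homogeneous components in even nonnegative degrees, with component in `𝓛 0` equal to `c • ε`.
Then `ad X` is not nilpotent; indeed for every nonzero `y ∈ 𝓛 (-1)` and every `m : ℕ`, the
component in `𝓛 (-1)` of `(ad X) ^ m y` equals `(-c) ^ m • y`, which is nonzero. -/
theorem euler_multiple_not_ad_nilpotent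
    {L : Type*} [LieRing L] [LieAlgebra ℝ L]
    (𝓛 : ℤ → Submodule ℝ L) [DirectSum.Decomposition 𝓛]
    (hbr : ∀ p q : ℤ, ∀ x ∈ 𝓛 p, ∀ y ∈ 𝓛 q, ⁅x, y⁆ ∈ 𝓛 (p + q))
    (N : ℕ) (hsupp : ∀ p : ℤ, (p < -1 ∨ (N : ℤ) < p) → 𝓛 p = ⊥)
    (ε : L) (hε0 : ε ∈ 𝓛 0) (hε : ∀ p : ℤ, ∀ x ∈ 𝓛 p, ⁅ε, x⁆ = p • x)
    (hne : 𝓛 (-1) ≠ ⊥)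
    (c : ℝ) (hc : c ≠ 0) (X : L)
    (hXeven : ∀ p : ℤ, (¬ ∃ i : ℕ, p = 2 * (i : ℤ)) → DirectSum.decompose 𝓛 X p = 0)
    (hX0 : (DirectSum.decompose 𝓛 X 0 : L) = c • ε) :
    ¬ IsNilpotent (LieAlgebra.ad ℝ L X) ∧
      ∀ y ∈ 𝓛 (-1), y ≠ 0 → ∀ m : ℕ,
        (DirectSum.decompose 𝓛 (((LieAlgebra.ad ℝ L X) ^ m) y) (-1) : L) = (-c) ^ m • y ∧
          (-c) ^ m • y ≠ 0 := by
  classical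
  set π : L →ₗ[ℝ] L :=
    (𝓛 (-1)).subtype ∘ₗ
      (DirectSum.component ℝ ℤ (fun i => (𝓛 i : Submodule ℝ L)) (-1)) ∘ₗ
      (DirectSum.decomposeLinearEquiv 𝓛).toLinearMap with hπdef
  have hπ_apply : ∀ z : L, π z = (DirectSum.decompose 𝓛 z (-1) : L) := by
    intro z; simp [hπdef, DirectSum.component, DFinsupp.lapply]; rfl
  have hπ_mem : ∀ z ∈ 𝓛 (-1), π z = z := by
    intro z hz; rw [hπ_apply, DirectSum.decompose_of_mem_same 𝓛 hz]
  have hπ_ne : ∀ p : ℤ, p ≠ -1 → ∀ z ∈ 𝓛 p, π z = 0 := by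
    intro p hp z hz; rw [hπ_apply, DirectSum.decompose_of_mem_ne 𝓛 hz hp]
  -- the key term computation
  have term : ∀ (z : L) (p q : ℤ),
      π ⁅(DirectSum.decompose 𝓛 X p : L), (DirectSum.decompose 𝓛 z q : L)⁆
        = (if p = 0 ∧ q = -1 then (-c) • (DirectSum.decompose 𝓛 z (-1) : L) else 0) := by
    intro z p q
    by_cases hp0 : p = 0
    · subst hp0
      by_cases hq : q = -1
      · subst hq
        rw [if_pos ⟨rfl, rfl⟩, hX0, smul_lie,
          hε (-1) _ (DirectSum.decompose 𝓛 z (-1)).2]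
        have hmem : ((-c) • (DirectSum.decompose 𝓛 z (-1) : L)) ∈ 𝓛 (-1) :=
          Submodule.smul_mem _ _ (DirectSum.decompose 𝓛 z (-1)).2
        rw [show (c • ((-1 : ℤ) • (DirectSum.decompose 𝓛 z (-1) : L)))
            = (-c) • (DirectSum.decompose 𝓛 z (-1) : L) by simp]
        exact hπ_mem _ hmem
      · rw [if_neg (by tauto)]
        have := hbr 0 q _ (DirectSum.decompose 𝓛 X 0).2 _ (DirectSum.decompose 𝓛 z q).2
        rw [zero_add] at this
        exact hπ_ne q hq _ this
    · rw [if_neg (by tauto)]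
      by_cases hev : ∃ i : ℕ, p = 2 * (i : ℤ)
      · by_cases hpq : p + q = -1
        · obtain ⟨i, rfl⟩ := hev
          have hq : 𝓛 q = ⊥ := hsupp q (Or.inl (by omega))
          have hz0 : (DirectSum.decompose 𝓛 z q : L) = 0 :=
            (Submodule.eq_bot_iff _).mp hq _ (DirectSum.decompose 𝓛 z q).2
          rw [hz0, lie_zero, map_zero]
        · exact hπ_ne (p + q) hpq _
            (hbr p q _ (DirectSum.decompose 𝓛 X p).2 _ (DirectSum.decompose 𝓛 z q).2)
      · have h0 : DirectSum.decompose 𝓛 X p = 0 := hXeven p hev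
        rw [h0]
        simp
  -- sums and Lie brackets
  have sum_lie' : ∀ (s : Finset ℤ) (f : ℤ → L) (w : L),
      ⁅∑ p ∈ s, f p, w⁆ = ∑ p ∈ s, ⁅f p, w⁆ := by
    intro s f w
    induction s using Finset.cons_induction with
    | empty => simp
    | cons a s ha ih => rw [Finset.sum_cons, Finset.sum_cons, add_lie, ih]
  have lie_sum' : ∀ (t : Finset ℤ) (g : ℤ → L) (x : L),
      ⁅x, ∑ q ∈ t, g q⁆ = ∑ q ∈ t, ⁅x, g q⁆ := by
    intro t g x
    induction t using Finset.cons_induction with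
    | empty => simp
    | cons a t ha ih => rw [Finset.sum_cons, Finset.sum_cons, lie_add, ih]
  -- double sum helper
  have hdouble : ∀ (s t : Finset ℤ) (v : L), ((-1 : ℤ) ∉ t → v = 0) → (0 : ℤ) ∈ s →
      (∑ p ∈ s, ∑ q ∈ t, if p = 0 ∧ q = -1 then v else 0) = v := by
    intro s t v hv h0
    rw [Finset.sum_eq_single 0]
    · by_cases h1 : (-1 : ℤ) ∈ t
      · rw [Finset.sum_eq_single (-1 : ℤ)]
        · simp
        · intro b _ hb; rw [if_neg (by tauto)]
        · intro h; exact absurd h1 h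
      · rw [hv h1]; simp
    · intro b _ hb; exact Finset.sum_eq_zero fun q _ => if_neg (by tauto)
    · intro h; exact absurd h0 h
  -- 0 is in the support of X (else ε = 0, contradicting hne)
  have h0supp : (0 : ℤ) ∈ (DirectSum.decompose 𝓛 X).support := by
    rw [DFinsupp.mem_support_iff]
    intro h
    have hε0' : c • ε = 0 := by rw [← hX0, h]; rfl
    have hεz : ε = 0 := by
      rcases smul_eq_zero.mp hε0' with h | h
      · exact absurd h hc
      · exact h
    apply hne
    rw [eq_bot_iff]
    intro x hx
    have h2 := hε (-1) x hx
    rw [hεz, zero_lie] at h2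
    have hx0 : x = 0 := by
      have h3 := h2.symm
      rw [neg_one_zsmul] at h3
      exact neg_eq_zero.mp h3
    simp [hx0]
  -- key bracket identity
  have key : ∀ z : L, π ⁅X, z⁆ = (-c) • π z := by
    intro z
    have e1 : ⁅X, z⁆ = ∑ p ∈ (DirectSum.decompose 𝓛 X).support,
        ∑ q ∈ (DirectSum.decompose 𝓛 z).support,
        ⁅(DirectSum.decompose 𝓛 X p : L), (DirectSum.decompose 𝓛 z q : L)⁆ := by
      conv_lhs => rw [← DirectSum.sum_support_decompose 𝓛 X,
        ← DirectSum.sum_support_decompose 𝓛 z]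
      rw [sum_lie']
      exact Finset.sum_congr rfl fun p _ => lie_sum' _ _ _
    rw [e1, map_sum]
    simp_rw [map_sum, term]
    rw [hdouble _ _ _ (fun h => by
        rw [DFinsupp.notMem_support_iff.mp h]; simp) h0supp, hπ_apply]
  -- main component formula
  have main : ∀ z ∈ 𝓛 (-1), ∀ m : ℕ,
      (DirectSum.decompose 𝓛 (((LieAlgebra.ad ℝ L X) ^ m) z) (-1) : L) = (-c) ^ m • z := by
    intro z hz m
    induction m with
    | zero => simpa using DirectSum.decompose_of_mem_same 𝓛 hz
    | succ m ih =>
      rw [pow_succ', Module.End.mul_apply, LieAlgebra.ad_apply, ← hπ_apply, key,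
        hπ_apply, ih, pow_succ', smul_smul, mul_comm, ← smul_smul]
  refine ⟨?_, fun y hy hy0 m =>
    ⟨main y hy m, smul_ne_zero (pow_ne_zero m (neg_ne_zero.mpr hc)) hy0⟩⟩
  rintro ⟨m, hm⟩
  obtain ⟨y, hy, hy0⟩ := (Submodule.ne_bot_iff _).mp hne
  have h1 := main y hy m
  rw [hm, LinearMap.zero_apply,
    DirectSum.decompose_of_mem_same 𝓛 (Submodule.zero_mem (𝓛 (-1)))] at h1
  exact smul_ne_zero (pow_ne_zero m (neg_ne_zero.mpr hc)) hy0 h1.symm
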